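/- If for some compatible metric d' and every ε > 0 there is a strong (ε,f,d')-chain from y to z, then for every closed neighborhood D of the diagonal in X × X there exist a closed symmetric neighborhood N of the diagonal and an integer n > 0 such that N^{3^n} ⊆ D and there is an (N,f)-chain of length n from y to z. -/

import Mathlib

/-- The m-fold relational composition N^m : (a,b) ∈ N^m iff there is a chain of
length m from a to b with consecutive pairs in N. -/
def relPow {X : Type*} (N : Set (X × X)) (m : ℕ) : Set (X × X) :=
  {p | ∃ c : ℕ → X, c 0 = p.1 ∧ c m = p.2 ∧ ∀ i < m, (c i, c (i + 1)) ∈ N}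

/-- An (N,f)-chain of length n from y to z. -/
def IsNChain {X : Type*} (f : X → X) (N : Set (X × X)) (n : ℕ) (y z : X) : Prop :=
  ∃ c : ℕ → X, c 0 = y ∧ c n = z ∧ ∀ i < n, (f (c i), c (i + 1)) ∈ N

/-- A strong (ε,f,d)-chain from x to y, for a distance function d. -/
def IsStrongChainD {X : Type*} (d : X → X → ℝ) (f : X → X) (ε : ℝ) (x y : X) : Prop :=
  ∃ n : ℕ, 1 ≤ n ∧ ∃ c : ℕ → X, c 0 = x ∧ c n = y ∧
    ∑ i ∈ Finset.range n, d (f (c i)) (c (i + 1)) ≤ ε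

set_option linter.unusedSectionVars false
set_option linter.unusedVariables false
set_option maxHeartbeats 1000000

section Aux

variable {X : Type*} [PseudoMetricSpace X] {ι : Type*} [Fintype ι] [Nonempty ι]

/-- source of a directed jump -/
def jsrc (a b : ι → X) (j : ι × Bool) : X := if j.2 then a j.1 else b j.1

/-- target of a directed jump -/
def jtgt (a b : ι → X) (j : ι × Bool) : X := if j.2 then b j.1 else a j.1

/-- glued path pseudo-distance with at most k jumps -/
noncomputable def FF (a b : ι → X) : ℕ → X → X → ℝ
  | 0, x, y => dist x y
  | (k+1), x, y => min (FF a b k x y)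
      (Finset.univ.inf' Finset.univ_nonempty
        fun j : ι × Bool => dist x (jsrc a b j) + FF a b k (jtgt a b j) y)

/-- cost of a path with prescribed jump list -/
noncomputable def cst (a b : ι → X) : X → List (ι × Bool) → X → ℝ
  | x, [], y => dist x y
  | x, j :: P, y => dist x (jsrc a b j) + cst a b (jtgt a b j) P y

variable (a b : ι → X)

theorem FF_nonneg : ∀ k x y, 0 ≤ FF a b k x y := by
  intro k
  induction k with
  | zero => intro x y; exact dist_nonneg
  | succ k ih =>
    intro x y
    refine le_min (ih x y) (Finset.le_inf' _ _ fun j _ => add_nonneg dist_nonneg (ih _ _))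

theorem FF_le_dist : ∀ k x y, FF a b k x y ≤ dist x y := by
  intro k
  induction k with
  | zero => intro x y; exact le_rfl
  | succ k ih => intro x y; exact (min_le_left _ _).trans (ih x y)

theorem FF_succ_le (k : ℕ) (x y : X) : FF a b (k+1) x y ≤ FF a b k x y := min_le_left _ _

theorem FF_le_jump (k : ℕ) (x y : X) (j : ι × Bool) :
    FF a b (k+1) x y ≤ dist x (jsrc a b j) + FF a b k (jtgt a b j) y :=
  (min_le_right _ _).trans (Finset.inf'_le _ (Finset.mem_univ j))

theorem FF_dist_triangle : ∀ k (x y z : X), FF a b k x z ≤ dist x y + FF a b k y z := by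
  intro k
  induction k with
  | zero => intro x y z; exact dist_triangle x y z
  | succ k ih =>
    intro x y z
    rcases min_cases (FF a b k y z)
      (Finset.univ.inf' Finset.univ_nonempty
        fun j : ι × Bool => dist y (jsrc a b j) + FF a b k (jtgt a b j) z) with
      ⟨heq, _⟩ | ⟨heq, _⟩
    · calc FF a b (k+1) x z ≤ FF a b k x z := FF_succ_le a b k x z
        _ ≤ dist x y + FF a b k y z := ih x y z
        _ = dist x y + FF a b (k+1) y z := by rw [FF, heq]
    · obtain ⟨j, _, hj⟩ := Finset.exists_mem_eq_inf' (Finset.univ_nonempty)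
        (fun j : ι × Bool => dist y (jsrc a b j) + FF a b k (jtgt a b j) z)
      calc FF a b (k+1) x z ≤ dist x (jsrc a b j) + FF a b k (jtgt a b j) z :=
            FF_le_jump a b k x z j
        _ ≤ (dist x y + dist y (jsrc a b j)) + FF a b k (jtgt a b j) z := by
            gcongr; exact dist_triangle x y (jsrc a b j)
        _ = dist x y + (dist y (jsrc a b j) + FF a b k (jtgt a b j) z) := by ring
        _ = dist x y + FF a b (k+1) y z := by rw [FF, heq, hj]

theorem FF_triangle : ∀ k l (x y z : X), FF a b (k + l) x z ≤ FF a b k x y + FF a b l y z := by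
  intro k
  induction k with
  | zero => intro l x y z; simpa [FF] using FF_dist_triangle a b l x y z
  | succ k ih =>
    intro l x y z
    rcases min_cases (FF a b k x y)
      (Finset.univ.inf' Finset.univ_nonempty
        fun j : ι × Bool => dist x (jsrc a b j) + FF a b k (jtgt a b j) y) with
      ⟨heq, _⟩ | ⟨heq, _⟩
    · calc FF a b (k+1+l) x z ≤ FF a b (k+l) x z := by
            have hkl : k+1+l = (k+l)+1 := by ring
            rw [hkl]; exact FF_succ_le a b _ x z
        _ ≤ FF a b k x y + FF a b l y z := ih l x y z
        _ = FF a b (k+1) x y + FF a b l y z := by rw [FF, heq]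
    · obtain ⟨j, _, hj⟩ := Finset.exists_mem_eq_inf' (Finset.univ_nonempty)
        (fun j : ι × Bool => dist x (jsrc a b j) + FF a b k (jtgt a b j) y)
      have h1 : FF a b (k+1+l) x z ≤ dist x (jsrc a b j) + FF a b (k+l) (jtgt a b j) z := by
        have hkl : k+1+l = (k+l)+1 := by ring
        rw [hkl]; exact FF_le_jump a b (k+l) x z j
      calc FF a b (k+1+l) x z ≤ dist x (jsrc a b j) + FF a b (k+l) (jtgt a b j) z := h1
        _ ≤ dist x (jsrc a b j) + (FF a b k (jtgt a b j) y + FF a b l y z) := by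
            gcongr; exact ih l (jtgt a b j) y z
        _ = (dist x (jsrc a b j) + FF a b k (jtgt a b j) y) + FF a b l y z := by ring
        _ = FF a b (k+1) x y + FF a b l y z := by rw [FF, heq, hj]

theorem FF_pair (k : ℕ) (j : ι × Bool) : FF a b (k+1) (jsrc a b j) (jtgt a b j) ≤ 0 := by
  calc FF a b (k+1) (jsrc a b j) (jtgt a b j)
      ≤ dist (jsrc a b j) (jsrc a b j) + FF a b k (jtgt a b j) (jtgt a b j) :=
        FF_le_jump a b k _ _ j
    _ ≤ 0 + dist (jtgt a b j) (jtgt a b j) := by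
        rw [dist_self]; gcongr; exact FF_le_dist a b k _ _
    _ = 0 := by rw [dist_self]; ring

theorem FF_pair' (k : ℕ) (hk : 0 < k) (j : ι × Bool) :
    FF a b k (jsrc a b j) (jtgt a b j) ≤ 0 := by
  cases k with
  | zero => omega
  | succ m => exact FF_pair a b m j

theorem cst_nonneg : ∀ (P : List (ι × Bool)) (x y : X), 0 ≤ cst a b x P y := by
  intro P
  induction P with
  | nil => intro x y; exact dist_nonneg
  | cons j P ih => intro x y; exact add_nonneg dist_nonneg (ih _ _)

theorem cst_dist_le : ∀ (P : List (ι × Bool)) (x w y : X),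
    cst a b x P y ≤ dist x w + cst a b w P y := by
  intro P
  induction P with
  | nil => intro x w y; exact dist_triangle x w y
  | cons j P ih =>
    intro x w y
    show dist x (jsrc a b j) + cst a b (jtgt a b j) P y ≤
      dist x w + (dist w (jsrc a b j) + cst a b (jtgt a b j) P y)
    have := dist_triangle x w (jsrc a b j)
    linarith

theorem cst_drop : ∀ (A : List (ι × Bool)) (q : ι × Bool) (B : List (ι × Bool)) (w y : X),
    cst a b (jtgt a b q) B y ≤ cst a b w (A ++ q :: B) y := by
  intro A
  induction A with
  | nil =>
    intro q B w y
    show cst a b (jtgt a b q) B y ≤ dist w (jsrc a b q) + cst a b (jtgt a b q) B y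
    have := dist_nonneg (x := w) (y := jsrc a b q)
    linarith
  | cons j A ih =>
    intro q B w y
    show cst a b (jtgt a b q) B y ≤ dist w (jsrc a b j) + cst a b (jtgt a b j) (A ++ q :: B) y
    have := ih q B (jtgt a b j) y
    have := dist_nonneg (x := w) (y := jsrc a b j)
    linarith

theorem exists_cst_le : ∀ (k : ℕ) (x y : X), ∃ P : List (ι × Bool),
    cst a b x P y ≤ FF a b k x y := by
  intro k
  induction k with
  | zero => intro x y; exact ⟨[], le_rfl⟩
  | succ k ih =>
    intro x y
    rcases min_cases (FF a b k x y)
      (Finset.univ.inf' Finset.univ_nonempty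
        fun j : ι × Bool => dist x (jsrc a b j) + FF a b k (jtgt a b j) y) with
      ⟨heq, _⟩ | ⟨heq, _⟩
    · obtain ⟨P, hP⟩ := ih x y
      exact ⟨P, by rw [FF, heq]; exact hP⟩
    · obtain ⟨j, _, hj⟩ := Finset.exists_mem_eq_inf' (Finset.univ_nonempty)
        (fun j : ι × Bool => dist x (jsrc a b j) + FF a b k (jtgt a b j) y)
      obtain ⟨P, hP⟩ := ih (jtgt a b j) y
      refine ⟨j :: P, ?_⟩
      show dist x (jsrc a b j) + cst a b (jtgt a b j) P y ≤ _
      rw [FF, heq, hj]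
      linarith

theorem dedup_cst : ∀ (P : List (ι × Bool)) (x y : X),
    ∃ Q : List (ι × Bool), (Q.map Prod.fst).Nodup ∧ cst a b x Q y ≤ cst a b x P y := by
  intro P
  induction P with
  | nil => intro x y; exact ⟨[], List.nodup_nil, le_rfl⟩
  | cons j P ih =>
    intro x y
    obtain ⟨Q', hnd, hle⟩ := ih (jtgt a b j) y
    by_cases hmem : j.1 ∈ Q'.map Prod.fst
    · obtain ⟨q, hqQ, hq1⟩ := List.mem_map.mp hmem
      obtain ⟨A, B, hAB⟩ := List.append_of_mem hqQ
      subst hAB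
      have hndB : ((q :: B).map Prod.fst).Nodup := by
        have hsub : List.Sublist ((q :: B).map Prod.fst) ((A ++ q :: B).map Prod.fst) :=
          List.Sublist.map _ (List.sublist_append_right _ _)
        exact hnd.sublist hsub
      rw [List.map_cons, List.nodup_cons] at hndB
      by_cases hb : q.2 = j.2
      · have hqj : q = j := Prod.ext hq1 hb
        subst hqj
        refine ⟨q :: B, ?_, ?_⟩
        · rw [List.map_cons, List.nodup_cons]; exact hndB
        · show dist x (jsrc a b q) + cst a b (jtgt a b q) B y ≤
            dist x (jsrc a b q) + cst a b (jtgt a b q) P y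
          have h1 := cst_drop a b A q B (jtgt a b q) y
          linarith [hle, h1]
      · have hb' : q.2 = !j.2 := by
          cases hq2 : q.2 <;> cases hj2 : j.2 <;> simp_all
        have htgt : jtgt a b q = jsrc a b j := by
          unfold jtgt jsrc
          rw [hq1, hb']
          cases j.2 <;> simp
        refine ⟨B, hndB.2, ?_⟩
        show cst a b x B y ≤ dist x (jsrc a b j) + cst a b (jtgt a b j) P y
        have h1 : cst a b (jtgt a b q) B y ≤ cst a b (jtgt a b j) (A ++ q :: B) y :=
          cst_drop a b A q B (jtgt a b j) y
        have h2 : cst a b x B y ≤ dist x (jtgt a b q) + cst a b (jtgt a b q) B y :=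
          cst_dist_le a b B x (jtgt a b q) y
        rw [htgt] at h1 h2
        linarith
    · refine ⟨j :: Q', ?_, ?_⟩
      · rw [List.map_cons, List.nodup_cons]; exact ⟨hmem, hnd⟩
      · show dist x (jsrc a b j) + cst a b (jtgt a b j) Q' y ≤
          dist x (jsrc a b j) + cst a b (jtgt a b j) P y
        linarith

theorem dist_le_cst : ∀ (P : List (ι × Bool)) (x y : X),
    dist x y ≤ cst a b x P y + (P.map fun j => dist (a j.1) (b j.1)).sum := by
  intro P
  induction P with
  | nil => intro x y; simp [cst]
  | cons j P ih =>
    intro x y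
    have h1 : dist x y ≤ dist x (jsrc a b j) + dist (jsrc a b j) (jtgt a b j)
        + dist (jtgt a b j) y := by
      have := dist_triangle x (jsrc a b j) y
      have := dist_triangle (jsrc a b j) (jtgt a b j) y
      linarith
    have h2 : dist (jsrc a b j) (jtgt a b j) = dist (a j.1) (b j.1) := by
      unfold jsrc jtgt; cases j.2 <;> simp [dist_comm]
    have h3 := ih (jtgt a b j) y
    show dist x y ≤ (dist x (jsrc a b j) + cst a b (jtgt a b j) P y) + _
    rw [List.map_cons, List.sum_cons]
    linarith

theorem sum_nodup_le (P : List (ι × Bool)) (hnd : (P.map Prod.fst).Nodup) :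
    (P.map fun j => dist (a j.1) (b j.1)).sum ≤ ∑ i : ι, dist (a i) (b i) := by
  classical
  have h1 : (P.map fun j => dist (a j.1) (b j.1)) =
      (P.map Prod.fst).map fun i => dist (a i) (b i) := by
    rw [List.map_map]; rfl
  rw [h1, ← List.sum_toFinset _ hnd]
  exact Finset.sum_le_sum_of_subset_of_nonneg (Finset.subset_univ _)
    (fun i _ _ => dist_nonneg)

/-- if the endpoints of a pair are linked by a path of m relation-steps each of
FF-size at most δ, then dist of the endpoints is controlled. -/
theorem dist_le_of_relchain {n : ℕ} (hn : 0 < n) (e : ℕ → X) (m : ℕ)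
    (hstep : ∀ i < m, FF a b n (e i) (e (i+1)) ≤ δ) (hδ : 0 ≤ δ) :
    dist (e 0) (e m) ≤ m * δ + ∑ i : ι, dist (a i) (b i) := by
  have key : ∀ i ≤ m, FF a b (n*i) (e 0) (e i) ≤ i * δ := by
    intro i
    induction i with
    | zero => intro _; simp [FF]
    | succ i ih =>
      intro hi
      have h1 : FF a b (n*i + n) (e 0) (e (i+1)) ≤
          FF a b (n*i) (e 0) (e i) + FF a b n (e i) (e (i+1)) :=
        FF_triangle a b (n*i) n (e 0) (e i) (e (i+1))
      have h2 := ih (Nat.le_of_succ_le hi)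
      have h3 := hstep i (Nat.lt_of_succ_le hi)
      have h4 : n*(i+1) = n*i + n := by ring
      rw [h4]
      push_cast
      calc FF a b (n*i+n) (e 0) (e (i+1)) ≤ i * δ + δ := by linarith
        _ = (i+1) * δ := by ring
  have hF : FF a b (n*m) (e 0) (e m) ≤ m * δ := key m le_rfl
  obtain ⟨P, hP⟩ := exists_cst_le a b (n*m) (e 0) (e m)
  obtain ⟨Q, hQnd, hQle⟩ := dedup_cst a b P (e 0) (e m)
  calc dist (e 0) (e m)
      ≤ cst a b (e 0) Q (e m) + (Q.map fun j => dist (a j.1) (b j.1)).sum :=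
        dist_le_cst a b Q (e 0) (e m)
    _ ≤ m * δ + ∑ i : ι, dist (a i) (b i) := by
        have := sum_nodup_le a b Q hQnd
        linarith

end Aux

/-- If for some compatible metric d' there are strong (ε,f,d')-chains from y to z for
all ε > 0, then for every closed neighborhood D of the diagonal there exist a closed
symmetric neighborhood N of the diagonal and n > 0 with N^{3^n} ⊆ D and an
(N,f)-chain of length n from y to z. -/
theorem strong_chains_imp_w_rel {X : Type*} [t : TopologicalSpace X] [CompactSpace X]
    (f : X → X) (hf : Continuous f) (y z : X)
    (m' : MetricSpace X) (hm' : m'.toUniformSpace.toTopologicalSpace = t)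
    (h : ∀ ε : ℝ, 0 < ε → IsStrongChainD (@dist X m'.toDist) f ε y z) :
    ∀ D : Set (X × X), IsClosed D → D ∈ nhdsSet (Set.diagonal X) →
      ∃ N : Set (X × X), IsClosed N ∧ N ∈ nhdsSet (Set.diagonal X) ∧
        (∀ a b : X, (a, b) ∈ N → (b, a) ∈ N) ∧
        ∃ n : ℕ, 0 < n ∧ relPow N (3 ^ n) ⊆ D ∧ IsNChain f N n y z := by
  subst hm'
  letI : MetricSpace X := m'
  intro D hDcl hD
  have hDu : D ∈ uniformity X := by
    rw [← nhdsSet_diagonal_eq_uniformity]; exact hD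
  obtain ⟨ε₀, hε₀, hball⟩ := Metric.mem_uniformity_dist.mp hDu
  obtain ⟨n, hn1, c, hc0, hcn, hsum⟩ := h (ε₀/4) (by positivity)
  have hn : 0 < n := hn1
  haveI : Nonempty (Fin n) := ⟨⟨0, hn⟩⟩
  set a : Fin n → X := fun i => f (c i) with ha
  set b : Fin n → X := fun i => c (i + 1) with hb
  set δ : ℝ := ε₀ / 4 / 3 ^ n with hδdef
  have hδpos : 0 < δ := by positivity
  set N : Set (X × X) :=
    {p : X × X | dist p.1 p.2 ≤ δ} ∪ ⋃ i : Fin n, {(a i, b i), (b i, a i)} with hN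
  have hSsum : ∑ i : Fin n, dist (a i) (b i) ≤ ε₀ / 4 := by
    rw [ha, hb]
    calc ∑ i : Fin n, dist (f (c i)) (c (i + 1))
        = ∑ i ∈ Finset.range n, dist (f (c i)) (c (i + 1)) := by
          rw [← Fin.sum_univ_eq_sum_range]
      _ ≤ ε₀ / 4 := hsum
  refine ⟨N, ?_, ?_, ?_, n, hn, ?_, ?_⟩
  · -- closed
    refine IsClosed.union ?_ ?_
    · exact isClosed_le continuous_dist continuous_const
    · refine isClosed_iUnion_of_finite fun i => ?_
      exact (Set.finite_singleton _ |>.insert _).isClosed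
  · -- neighborhood of the diagonal
    have hmem : {p : X × X | dist p.1 p.2 < δ} ∈ uniformity X :=
      Metric.dist_mem_uniformity hδpos
    rw [nhdsSet_diagonal_eq_uniformity]
    exact Filter.mem_of_superset hmem fun p hp => Or.inl (show dist p.1 p.2 ≤ δ from le_of_lt hp)
  · -- symmetric
    rintro u v (huv | huv)
    · exact Or.inl (by simpa [dist_comm] using huv)
    · obtain ⟨i, hi⟩ := Set.mem_iUnion.mp huv
      refine Or.inr (Set.mem_iUnion.mpr ⟨i, ?_⟩)
      simp only [Set.mem_insert_iff, Set.mem_singleton_iff, Prod.ext_iff] at hi ⊢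
      tauto
  · -- relPow N (3^n) ⊆ D
    rintro ⟨x, w⟩ ⟨e, he0, hem, hstep⟩
    have hedge : ∀ i < 3 ^ n, FF a b n (e i) (e (i+1)) ≤ δ := by
      intro i hi
      rcases hstep i hi with hball' | hpair
      · exact (FF_le_dist a b n _ _).trans hball'
      · obtain ⟨i', hi'⟩ := Set.mem_iUnion.mp hpair
        rcases hi' with hp | hp
        · have h1 : (e i, e (i+1)) = (jsrc a b (i', true), jtgt a b (i', true)) := by
            simpa [jsrc, jtgt] using hp
          injection h1 with h1a h1b
          rw [h1a, h1b]
          exact (FF_pair' a b n hn (i', true)).trans hδpos.le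
        · rw [Set.mem_singleton_iff] at hp
          have h1 : (e i, e (i+1)) = (jsrc a b (i', false), jtgt a b (i', false)) := by
            simpa [jsrc, jtgt] using hp
          injection h1 with h1a h1b
          rw [h1a, h1b]
          exact (FF_pair' a b n hn (i', false)).trans hδpos.le
    have hdist : dist (e 0) (e (3^n)) ≤ (3:ℝ)^n * δ + ∑ i : Fin n, dist (a i) (b i) := by
      have := dist_le_of_relchain (δ := δ) a b hn e (3^n) hedge hδpos.le
      push_cast at this ⊢
      convert this using 2
    have h3δ : (3:ℝ)^n * δ = ε₀ / 4 := by
      rw [hδdef]; field_simp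
    rw [he0, hem] at hdist
    have : dist x w < ε₀ := by
      rw [h3δ] at hdist
      have h4 : (0:ℝ) < ε₀ / 4 := by positivity
      linarith
    exact hball this
  · -- the chain
    refine ⟨c, hc0, hcn, fun i hi => ?_⟩
    refine Or.inr (Set.mem_iUnion.mpr ⟨⟨i, hi⟩, Or.inl ?_⟩)
    rw [ha, hb]
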